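/- Let ε > 0 and let u ∈ ℝ^N have nonnegative entries with S := Σ_{l=1}^N f(l)u_l > 0, and set ρ := S/(ε + S). Then the matrix identity A^ε(u) = I + ρ²(A^0(u) − I) + ρ(1−ρ)D(u) holds. -/

import Mathlib

open Finset Matrix

/-- `B^ε_n(u) = (ε + f(n) Σ_k u_k) / (ε + Σ_k f(k) u_k)`. -/
noncomputable def Bv (N : ℕ) (f : Fin N → ℝ) (ε : ℝ) (u : Fin N → ℝ) (n : Fin N) : ℝ :=
  (ε + f n * ∑ k, u k) / (ε + ∑ k, f k * u k)

/-- The matrix `A^ε(u)`. -/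
noncomputable def Amat (N : ℕ) (f : Fin N → ℝ) (ε : ℝ) (u : Fin N → ℝ) :
    Matrix (Fin N) (Fin N) ℝ :=
  Matrix.of fun n k =>
    if n = k then
      Bv N f ε u n + u n * (f n * ∑ l, (f l - f n) * u l) / (ε + ∑ l, f l * u l) ^ 2
    else
      u n * (ε * (f n - f k) + f n * ∑ l, (f l - f k) * u l) / (ε + ∑ l, f l * u l) ^ 2

/-- The matrix `D(u)`: `D_{nk} = (f(n)−f(k))u_n/S` for `n ≠ k`,
`D_{nn} = −Σ_{m≠n} D_{mn}`, where `S = Σ_l f(l)u_l`. -/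
noncomputable def Dmat (N : ℕ) (f : Fin N → ℝ) (u : Fin N → ℝ) :
    Matrix (Fin N) (Fin N) ℝ :=
  Matrix.of fun n k =>
    if n = k then -∑ m ∈ Finset.univ.erase n, (f m - f n) * u m / ∑ l, f l * u l
    else (f n - f k) * u n / ∑ l, f l * u l

/-- Decomposition `A^ε(u) = I + ρ²(A⁰(u) − I) + ρ(1−ρ)D(u)` with `ρ = S/(ε+S)`. -/
theorem Amat_decomposition (N : ℕ) (hN : 2 ≤ N) (f : Fin N → ℝ) (hf : ∀ n, 0 < f n)
    (ε : ℝ) (hε : 0 < ε) (u : Fin N → ℝ) (hu : ∀ n, 0 ≤ u n)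
    (S : ℝ) (hS : S = ∑ l, f l * u l) (hSpos : 0 < S)
    (ρ : ℝ) (hρ : ρ = S / (ε + S)) :
    Amat N f ε u =
      1 + ρ ^ 2 • (Amat N f 0 u - 1) + (ρ * (1 - ρ)) • Dmat N f u := by
  subst hS hρ
  have hS0 : (∑ l, f l * u l) ≠ 0 := ne_of_gt hSpos
  have hεS : ε + ∑ l, f l * u l ≠ 0 := by positivity
  have hsum : ∀ c : ℝ, ∑ l, (f l - c) * u l = (∑ l, f l * u l) - c * ∑ l, u l := by
    intro c
    rw [Finset.mul_sum, ← Finset.sum_sub_distrib]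
    exact Finset.sum_congr rfl fun l _ => by ring
  ext n k
  by_cases h : n = k
  · subst h
    simp only [Amat, Dmat, Bv, Matrix.add_apply, Matrix.smul_apply, Matrix.sub_apply,
      Matrix.one_apply_eq, Matrix.of_apply, if_pos rfl, ↓reduceIte, smul_eq_mul]
    rw [Finset.sum_erase _ (by simp), ← Finset.sum_div]
    simp only [hsum]
    field_simp
    ring
  · simp only [Amat, Dmat, Bv, Matrix.add_apply, Matrix.smul_apply, Matrix.sub_apply,
      Matrix.one_apply_ne h, Matrix.of_apply, if_neg h, smul_eq_mul]
    simp only [hsum]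
    field_simp
    ring
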